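/- Let n ≥ 1, σ₀ ∈ ℂ, ε > 0, and let 𝔓 : B(σ₀,ε) → Matrix n n ℂ be holomorphic (entrywise) on the open ball B(σ₀,ε) with 𝔓(σ) invertible for all σ with 0 < |σ − σ₀| < ε. Define 𝔔 : B(σ̄₀,ε) → Matrix n n ℂ by 𝔔(σ) = 𝔓(σ̄)ᴴ (conjugate transpose); 𝔔 is holomorphic on B(σ̄₀,ε). Let 𝔎 = 𝔎(𝔓, {σ₀}) and 𝔎* = 𝔎(𝔔, {σ̄₀}). For φ ∈ 𝔎, ψ ∈ 𝔎* and 0 < r < ε set [φ,ψ] = (1/(2π)) ∮_{|σ−σ₀|=r} ⟨𝔓(σ)·φ(σ), ψ(σ̄)⟩ dσ, where ⟨u,v⟩ = Σ_{i=1}^n u_i · conj(v_i) is the standard Hermitian inner product on ℂⁿ. Then [φ,ψ] does not depend on the choice of r ∈ (0,ε), and the pairing [·,·] : 𝔎 × 𝔎* → ℂ is nondegenerate: if φ ∈ 𝔎 satisfies [φ,ψ] = 0 for all ψ ∈ 𝔎*, then φ = 0, and if ψ ∈ 𝔎* satisfies [φ,ψ] = 0 for all φ ∈ 𝔎, then ψ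 = 0. -/

import Mathlib

open Metric Set Complex

noncomputable section

/-- A principal part at `c ∈ ℂ` with values in a complex vector space `E`:
`φ(σ) = ∑_{k=1}^m a_k (σ - c)^{-k}` (with the convention that the value at the pole is `0`,
coming from `0⁻¹ = 0` in Lean; for `σ ≠ c` this is exactly the usual formula). -/
def IsPrincipalPart {E : Type*} [AddCommGroup E] [Module ℂ E] (c : ℂ) (φ : ℂ → E) : Prop :=
  ∃ (m : ℕ) (a : ℕ → E), ∀ σ : ℂ, φ σ = ∑ k ∈ Finset.Icc 1 m, ((σ - c) ^ (-(k : ℤ))) • a k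

/-- A singular function with poles in `S ⊆ ℂ`: a finite sum of principal parts at
finitely many points of `S`. -/
def IsSingularFunction {E : Type*} [AddCommGroup E] [Module ℂ E] (S : Set ℂ) (φ : ℂ → E) :
    Prop :=
  ∃ (F : Finset ℂ) (p : ℂ → ℂ → E), (↑F : Set ℂ) ⊆ S ∧ (∀ c ∈ F, IsPrincipalPart c (p c)) ∧
    ∀ σ : ℂ, φ σ = ∑ c ∈ F, p c σ

/-- The space `𝒦` of singular functions `φ` with poles in `Ω` such that `σ ↦ P σ (φ σ)`
agrees, off a finite set (the poles of `φ`), with a function holomorphic on all of `Ω`. -/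
def kernelSpace {𝒟 H : Type*} [NormedAddCommGroup 𝒟] [NormedSpace ℂ 𝒟]
    [NormedAddCommGroup H] [NormedSpace ℂ H]
    (Ω : Set ℂ) (P : ℂ → (𝒟 →L[ℂ] H)) : Set (ℂ → 𝒟) :=
  {φ | IsSingularFunction Ω φ ∧ ∃ g : ℂ → H, DifferentiableOn ℂ g Ω ∧
    ∃ F : Set ℂ, F.Finite ∧ ∀ σ ∈ Ω \ F, P σ (φ σ) = g σ}

/-- The local kernel space `𝔎(𝔓, S)` of a holomorphic family of `n × n` matrices on `D`:
singular functions `φ : ℂ → ℂⁿ` with poles in `S` such that `σ ↦ 𝔓(σ) · φ(σ)` agrees,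
off a finite set (the poles of `φ`), with a function holomorphic on all of `D`. -/
def matKernelSpace {n : ℕ} (D : Set ℂ) (P : ℂ → Matrix (Fin n) (Fin n) ℂ) (S : Set ℂ) :
    Set (ℂ → (Fin n → ℂ)) :=
  {φ | IsSingularFunction S φ ∧ ∃ g : ℂ → (Fin n → ℂ),
    (∀ i, DifferentiableOn ℂ (fun σ => g σ i) D) ∧
    ∃ F : Set ℂ, F.Finite ∧ ∀ σ ∈ D \ F, (P σ).mulVec (φ σ) = g σ}

/-- A subset `K` of a complex vector space (in practice a linear subspace) has a basis of
cardinality `d`: there are `d` elements of `K` that are linearly independent and span `K`. -/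
def HasBasisOfCard {E : Type*} [AddCommGroup E] [Module ℂ E] (K : Set E) (d : ℕ) : Prop :=
  ∃ φ : Fin d → E, (∀ i, φ i ∈ K) ∧ LinearIndependent ℂ φ ∧
    ∀ ψ ∈ K, ψ ∈ Submodule.span ℂ (Set.range φ)

/-- A bounded operator is Fredholm of index `0`: finite-dimensional kernel, closed range,
finite-dimensional cokernel, and `dim ker = dim coker`. -/
def FredholmIndexZero {𝒟 H : Type*} [NormedAddCommGroup 𝒟] [NormedSpace ℂ 𝒟]
    [NormedAddCommGroup H] [NormedSpace ℂ H] (T : 𝒟 →L[ℂ] H) : Prop :=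
  FiniteDimensional ℂ (LinearMap.ker (T : 𝒟 →ₗ[ℂ] H)) ∧ IsClosed (LinearMap.range (T : 𝒟 →ₗ[ℂ] H) : Set H) ∧
    FiniteDimensional ℂ (H ⧸ LinearMap.range (T : 𝒟 →ₗ[ℂ] H)) ∧
    Module.finrank ℂ (LinearMap.ker (T : 𝒟 →ₗ[ℂ] H)) = Module.finrank ℂ (H ⧸ LinearMap.range (T : 𝒟 →ₗ[ℂ] H))

/-- The pairing `[φ,ψ] = (1/2π) ∮_{|σ-σ₀|=r} ⟨𝔓(σ)·φ(σ), ψ(σ̄)⟩ dσ`. -/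
def matPairing {n : ℕ} (𝔓 : ℂ → Matrix (Fin n) (Fin n) ℂ) (σ₀ : ℂ) (r : ℝ)
    (φ ψ : ℂ → (Fin n → ℂ)) : ℂ :=
  (2 * (Real.pi : ℂ))⁻¹ *
    ∮ σ in C(σ₀, r), ∑ i, ((𝔓 σ).mulVec (φ σ) i) * (starRingEnd ℂ) (ψ ((starRingEnd ℂ) σ) i)


lemma conj_hasDerivAt {f : ℂ → ℂ} {z d : ℂ} (h : HasDerivAt f d ((starRingEnd ℂ) z)) :
    HasDerivAt (fun w => (starRingEnd ℂ) (f ((starRingEnd ℂ) w))) ((starRingEnd ℂ) d) z := by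
  rw [hasDerivAt_iff_tendsto_slope] at h ⊢
  have hfun : (slope (fun w => (starRingEnd ℂ) (f ((starRingEnd ℂ) w))) z)
      = fun w => (starRingEnd ℂ) (slope f ((starRingEnd ℂ) z) ((starRingEnd ℂ) w)) := by
    funext w
    simp only [slope_def_field, div_eq_mul_inv, map_mul, map_sub, map_inv₀, Complex.conj_conj]
  rw [hfun]
  have h1 : Filter.Tendsto (fun w => (starRingEnd ℂ) w) (nhdsWithin z {z}ᶜ)
      (nhdsWithin ((starRingEnd ℂ) z) {(starRingEnd ℂ) z}ᶜ) := by
    apply Filter.Tendsto.inf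
    · exact (Complex.continuous_conj.tendsto z)
    · apply Filter.tendsto_principal_principal.2
      intro w hw
      simp only [Set.mem_compl_iff, Set.mem_singleton_iff] at hw ⊢
      intro hc
      exact hw (by simpa using congrArg (starRingEnd ℂ) hc)
  exact ((Complex.continuous_conj.tendsto d).comp (h.comp h1))

lemma conj_diffOn {f : ℂ → ℂ} {c : ℂ} {ε : ℝ} (h : DifferentiableOn ℂ f (ball c ε)) :
    DifferentiableOn ℂ (fun w => (starRingEnd ℂ) (f ((starRingEnd ℂ) w)))
      (ball ((starRingEnd ℂ) c) ε) := by
  intro z hz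
  have hz' : (starRingEnd ℂ) z ∈ ball c ε := by
    rw [mem_ball] at hz ⊢
    rw [← Complex.dist_conj_conj]
    simpa using hz
  have hd : DifferentiableAt ℂ f ((starRingEnd ℂ) z) :=
    h.differentiableAt (isOpen_ball.mem_nhds hz')
  exact ((conj_hasDerivAt hd.hasDerivAt).differentiableAt).differentiableWithinAt

-- circle integral congruence off a countable set
lemma circleIntegral_congr_off_countable {f g : ℂ → ℂ} {c : ℂ} {r : ℝ} (hr : 0 < r)
    {S : Set ℂ} (hS : S.Countable) (h : ∀ z ∈ sphere c r \ S, f z = g z) :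
    (∮ z in C(c, r), f z) = ∮ z in C(c, r), g z := by
  unfold circleIntegral
  apply intervalIntegral.integral_congr_ae
  have hnull : (circleMap c r ⁻¹' S).Countable := hS.preimage_circleMap c hr.ne'
  filter_upwards [hnull.ae_notMem MeasureTheory.volume] with θ hθ _
  have hmem : circleMap c r θ ∈ sphere c r := circleMap_mem_sphere c hr.le θ
  rw [h _ ⟨hmem, hθ⟩]

lemma circleIntegral_finset_sum {ι : Type*} (s : Finset ι) (f : ι → ℂ → ℂ) {c : ℂ} {r : ℝ}
    (h : ∀ i ∈ s, CircleIntegrable (f i) c r) :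
    (∮ z in C(c, r), ∑ i ∈ s, f i z) = ∑ i ∈ s, ∮ z in C(c, r), f i z := by
  unfold circleIntegral
  rw [← intervalIntegral.integral_finset_sum (fun i hi => (h i hi).out)]
  congr 1
  funext θ
  rw [Finset.smul_sum]

lemma zpow_circleIntegral {c : ℂ} {r : ℝ} (hr : 0 < r) (n : ℤ) :
    (∮ z in C(c, r), (z - c) ^ n) = if n = -1 then 2 * Real.pi * I else 0 := by
  split_ifs with h
  · subst h
    have : ∀ z : ℂ, (z - c) ^ (-1 : ℤ) = (z - c)⁻¹ := fun z => zpow_neg_one _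
    simp only [this]
    exact circleIntegral.integral_sub_inv_of_mem_ball (mem_ball_self hr)
  · exact circleIntegral.integral_sub_zpow_of_ne h c c r

-- Taylor splitting
lemma taylor_split {c : ℂ} : ∀ (p : ℕ) (G : ℂ → ℂ), AnalyticAt ℂ G c →
    ∃ (a : ℕ → ℂ) (ρ : ℂ → ℂ), AnalyticAt ℂ ρ c ∧
      ∀ z, G z = (∑ j ∈ Finset.range p, a j * (z - c) ^ j) + (z - c) ^ p * ρ z := by
  intro p
  induction p with
  | zero =>
    intro G hG
    exact ⟨0, G, hG, fun z => by simp⟩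
  | succ p ih =>
    intro G hG
    have hds : AnalyticAt ℂ (dslope G c) c := by
      rcases hG with ⟨q, hq⟩
      exact (hq.has_fpower_series_dslope_fslope).analyticAt
    rcases ih (dslope G c) hds with ⟨a, ρ, hρ, ha⟩
    refine ⟨fun j => if j = 0 then G c else a (j - 1), ρ, hρ, fun z => ?_⟩
    have key : G z = G c + (z - c) * dslope G c z := by
      have h1 := sub_smul_dslope G c z
      rw [smul_eq_mul] at h1
      linear_combination -h1
    rw [key, ha z, Finset.sum_range_succ']
    simp only [if_pos rfl, Nat.add_sub_cancel, if_neg (Nat.succ_ne_zero _), if_true]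
    rw [mul_add, Finset.mul_sum]
    have : ∀ x ∈ Finset.range p, (z - c) * (a x * (z - c) ^ x) = a x * (z - c) ^ (x + 1) := by
      intro x _; ring
    rw [Finset.sum_congr rfl this]
    ring

-- Meromorphic splitting
lemma merom_split {n : ℕ} {c : ℂ} {ε : ℝ} (hε : 0 < ε) {N : ℂ → ℂ}
    (hN : DifferentiableOn ℂ N (ball c ε)) (hNne : ∀ σ ∈ ball c ε, σ ≠ c → N σ ≠ 0)
    {v : ℂ → Fin n → ℂ} (hv : ∀ i, DifferentiableOn ℂ (fun σ => v σ i) (ball c ε)) :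
    ∃ (m : ℕ) (a : ℕ → Fin n → ℂ) (e : ℂ → Fin n → ℂ),
      (∀ i, DifferentiableOn ℂ (fun σ => e σ i) (ball c ε)) ∧
      ∀ σ ∈ ball c ε, σ ≠ c → ∀ i,
        (N σ)⁻¹ * v σ i =
          (∑ k ∈ Finset.Icc 1 m, ((σ - c) ^ (-(k : ℤ))) • a k) i + e σ i := by
  have hcb : c ∈ ball c ε := mem_ball_self hε
  have hball : ball c ε ∈ nhds c := isOpen_ball.mem_nhds hcb
  have hNanal : AnalyticAt ℂ N c := hN.analyticAt hball
  have horder : analyticOrderAt N c ≠ ⊤ := by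
    intro htop
    rw [analyticOrderAt_eq_top] at htop
    have h1 : ∀ᶠ z in nhdsWithin c {c}ᶜ, N z = 0 ∧ z ∈ ball c ε :=
      ((htop.and (isOpen_ball.eventually_mem hcb)).filter_mono nhdsWithin_le_nhds)
    rcases (h1.and self_mem_nhdsWithin).exists with ⟨z, ⟨hz0, hzb⟩, hzne⟩
    exact hNne z hzb hzne hz0
  obtain ⟨p, hp⟩ : ∃ p : ℕ, analyticOrderAt N c = (p : ℕ∞) := by
    rcases WithTop.ne_top_iff_exists.mp horder with ⟨p, hp⟩
    exact ⟨p, hp.symm⟩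
  rcases hNanal.analyticOrderAt_eq_natCast.mp hp with ⟨u, hu_an, hu0, hev⟩
  have hGanal : ∀ i, AnalyticAt ℂ (fun z => (u z)⁻¹ * v z i) c := fun i =>
    (hu_an.inv hu0).mul ((hv i).analyticAt hball)
  choose a ρ hρ hG using fun i => taylor_split p _ (hGanal i)
  classical
  refine ⟨p, fun k i => a i (p - k),
    fun σ i => if σ = c then ρ i c
      else (N σ)⁻¹ * v σ i - ∑ k ∈ Finset.Icc 1 p, ((σ - c) ^ (-(k : ℤ))) * a i (p - k),
    ?_, ?_⟩
  · intro i σ₁ hσ₁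
    by_cases hne : σ₁ = c
    · subst hne
      have hev2 : ∀ᶠ σ in nhds σ₁, N σ = (σ - σ₁) ^ p • u σ ∧ u σ ≠ 0 :=
        hev.and (hu_an.continuousAt.eventually_ne hu0)
      have heq : ∀ᶠ σ in nhds σ₁,
          (fun σ => if σ = σ₁ then ρ i σ₁
            else (N σ)⁻¹ * v σ i -
              ∑ k ∈ Finset.Icc 1 p, ((σ - σ₁) ^ (-(k : ℤ))) * a i (p - k)) σ = ρ i σ := by
        filter_upwards [hev2] with σ hσ
        rcases hσ with ⟨h1, h2⟩
        by_cases hσc : σ = σ₁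
        · subst hσc; simp
        · rw [if_neg hσc]
          have hzne : σ - σ₁ ≠ 0 := sub_ne_zero.2 hσc
          have hpow : (σ - σ₁) ^ p ≠ 0 := pow_ne_zero _ hzne
          have hNσ : N σ ≠ 0 := by rw [h1, smul_eq_mul]; exact mul_ne_zero hpow h2
          apply mul_left_cancel₀ hpow
          have e1 : (σ - σ₁) ^ p * ((N σ)⁻¹ * v σ i) = (u σ)⁻¹ * v σ i := by
            rw [h1]; field_simp [smul_eq_mul]; ring
          have e2 : (σ - σ₁) ^ p *
              (∑ k ∈ Finset.Icc 1 p, ((σ - σ₁) ^ (-(k : ℤ))) * a i (p - k))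
              = ∑ j ∈ Finset.range p, a i j * (σ - σ₁) ^ j := by
            rw [Finset.mul_sum]
            refine Finset.sum_nbij' (i := fun k => p - k) (j := fun j => p - j) ?_ ?_ ?_ ?_ ?_
            · intro k hk
              simp only [Finset.mem_Icc] at hk
              simp only [Finset.mem_range]
              omega
            · intro j hj
              simp only [Finset.mem_range] at hj
              simp only [Finset.mem_Icc]
              omega
            · intro k hk; simp only [Finset.mem_Icc] at hk; omega
            · intro j hj; simp only [Finset.mem_range] at hj; omega
            · intro k hk
              simp only [Finset.mem_Icc] at hk
              have hcast : ((p - k : ℕ) : ℤ) = (p : ℤ) - (k : ℤ) := by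
                rw [Nat.cast_sub hk.2]
              rw [← zpow_natCast (σ - σ₁) p, ← zpow_natCast (σ - σ₁) (p - k), hcast]
              rw [← mul_assoc, ← zpow_add₀ hzne]
              ring_nf
          rw [mul_sub, e1, e2, hG i σ, mul_comm ((σ - σ₁) ^ p) (ρ i σ)]
          ring
      exact ((hρ i).differentiableAt.congr_of_eventuallyEq heq).differentiableWithinAt
    · have hNσ : N σ₁ ≠ 0 := hNne σ₁ hσ₁ hne
      have hform : DifferentiableAt ℂ (fun σ => (N σ)⁻¹ * v σ i -
          ∑ k ∈ Finset.Icc 1 p, ((σ - c) ^ (-(k : ℤ))) * a i (p - k)) σ₁ := by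
        apply DifferentiableAt.sub
        · exact ((hN.differentiableAt (isOpen_ball.mem_nhds hσ₁)).inv hNσ).mul
            ((hv i).differentiableAt (isOpen_ball.mem_nhds hσ₁))
        · apply DifferentiableAt.fun_sum
          intro k _
          apply DifferentiableAt.mul_const
          have h1 : DifferentiableAt ℂ (fun x : ℂ => x ^ (-(k : ℤ)))
              (σ₁ - c) :=
            differentiableAt_zpow.mpr (Or.inl (sub_ne_zero.2 hne))
          exact h1.comp σ₁ (differentiableAt_id.sub_const c)
      have heq : ∀ᶠ σ in nhds σ₁,
          (fun σ => if σ = c then ρ i c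
            else (N σ)⁻¹ * v σ i -
              ∑ k ∈ Finset.Icc 1 p, ((σ - c) ^ (-(k : ℤ))) * a i (p - k)) σ
          = (N σ)⁻¹ * v σ i -
              ∑ k ∈ Finset.Icc 1 p, ((σ - c) ^ (-(k : ℤ))) * a i (p - k) := by
        filter_upwards [eventually_ne_nhds hne] with σ hσ
        rw [if_neg hσ]
      exact (hform.congr_of_eventuallyEq heq).differentiableWithinAt
  · intro σ hσ hσc i
    simp only [Finset.sum_apply, Pi.smul_apply, smul_eq_mul, if_neg hσc]
    ring

-- principal part / singular function at one point
lemma pp_of_sing {E : Type*} [AddCommGroup E] [Module ℂ E] {c : ℂ} {φ : ℂ → E}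
    (h : IsSingularFunction {c} φ) : IsPrincipalPart c φ := by
  rcases h with ⟨F, p, hF, hp, hφ⟩
  have hsub : F ⊆ ({c} : Finset ℂ) := by
    intro x hx
    have := hF hx
    simpa using this
  rcases Finset.subset_singleton_iff.mp hsub with h0 | h1
  · refine ⟨0, 0, fun σ => ?_⟩
    rw [hφ σ, h0]
    simp
  · rcases hp c (by rw [h1]; exact Finset.mem_singleton_self c) with ⟨m, a, hpc⟩
    refine ⟨m, a, fun σ => ?_⟩
    rw [hφ σ, h1, Finset.sum_singleton]
    exact hpc σ

lemma sing_of_pp {E : Type*} [AddCommGroup E] [Module ℂ E] {c : ℂ} {φ : ℂ → E}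
    (h : IsPrincipalPart c φ) : IsSingularFunction {c} φ := by
  refine ⟨{c}, fun _ => φ, by simp, ?_, fun σ => (Finset.sum_singleton _ _).symm⟩
  intro c' hc'
  rw [Finset.mem_singleton] at hc'
  subst hc'
  exact h

-- transposed conjugate of a vector family
def tconj {n : ℕ} (ψ : ℂ → Fin n → ℂ) : ℂ → Fin n → ℂ :=
  fun σ i => (starRingEnd ℂ) (ψ ((starRingEnd ℂ) σ) i)

lemma tconj_tconj {n : ℕ} (ψ : ℂ → Fin n → ℂ) : tconj (tconj ψ) = ψ := by
  funext σ i; simp [tconj]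

lemma tconj_pp {n : ℕ} {c : ℂ} {ψ : ℂ → Fin n → ℂ} (h : IsPrincipalPart c ψ) :
    IsPrincipalPart ((starRingEnd ℂ) c) (tconj ψ) := by
  rcases h with ⟨m, b, hb⟩
  refine ⟨m, fun k => fun i => (starRingEnd ℂ) (b k i), fun σ => ?_⟩
  funext i
  have h1 := congrFun (hb ((starRingEnd ℂ) σ)) i
  simp only [Finset.sum_apply, Pi.smul_apply, smul_eq_mul] at h1 ⊢
  calc tconj ψ σ i = (starRingEnd ℂ) (ψ ((starRingEnd ℂ) σ) i) := rfl
    _ = (starRingEnd ℂ) (∑ k ∈ Finset.Icc 1 m,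
          (((starRingEnd ℂ) σ - c) ^ (-(k : ℤ))) * b k i) := by rw [h1]
    _ = ∑ k ∈ Finset.Icc 1 m, ((σ - (starRingEnd ℂ) c) ^ (-(k : ℤ)))
          * (starRingEnd ℂ) (b k i) := by
        rw [map_sum]
        refine Finset.sum_congr rfl fun k _ => ?_
        rw [map_mul, map_zpow₀, map_sub, Complex.conj_conj]

lemma tconj_diffOn {n : ℕ} {c : ℂ} {ε : ℝ} {g : ℂ → Fin n → ℂ}
    (hg : ∀ i, DifferentiableOn ℂ (fun σ => g σ i) (ball c ε)) (i : Fin n) :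
    DifferentiableOn ℂ (fun σ => tconj g σ i) (ball ((starRingEnd ℂ) c) ε) :=
  conj_diffOn (hg i)

lemma tconj_kernel {n : ℕ} {c : ℂ} {ε : ℝ}
    {R M : ℂ → Matrix (Fin n) (Fin n) ℂ}
    (hM : ∀ σ i j, M σ i j = (starRingEnd ℂ) (R ((starRingEnd ℂ) σ) i j))
    {χ g : ℂ → Fin n → ℂ} {F : Set ℂ}
    (h : ∀ σ ∈ ball c ε \ F, (R σ).mulVec (χ σ) = g σ) :
    ∀ τ ∈ ball ((starRingEnd ℂ) c) ε \ ((starRingEnd ℂ) '' F),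
      (M τ).mulVec (tconj χ τ) = tconj g τ := by
  intro τ hτ
  have h1 : (starRingEnd ℂ) τ ∈ ball c ε := by
    have := hτ.1
    rw [mem_ball] at this ⊢
    rw [← Complex.dist_conj_conj]
    simpa using this
  have h2 : (starRingEnd ℂ) τ ∉ F := fun hh => hτ.2 ⟨_, hh, by simp⟩
  have h3 := h _ ⟨h1, h2⟩
  funext i
  have h4 := congrFun h3 i
  simp only [Matrix.mulVec, dotProduct] at h4 ⊢
  calc ∑ j, M τ i j * tconj χ τ j
      = ∑ j, (starRingEnd ℂ) (R ((starRingEnd ℂ) τ) i j * χ ((starRingEnd ℂ) τ) j) := by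
        refine Finset.sum_congr rfl fun j _ => ?_
        rw [map_mul, hM]
        rfl
    _ = (starRingEnd ℂ) (∑ j, R ((starRingEnd ℂ) τ) i j * χ ((starRingEnd ℂ) τ) j) :=
        (map_sum _ _ _).symm
    _ = tconj g τ i := by rw [h4]; rfl

-- differentiability of determinant and adjugate entries
lemma det_diffOn {n : ℕ} {D : Set ℂ} {M : ℂ → Matrix (Fin n) (Fin n) ℂ}
    (h : ∀ i j, DifferentiableOn ℂ (fun σ => M σ i j) D) :
    DifferentiableOn ℂ (fun σ => (M σ).det) D := by
  have hrw : (fun σ => (M σ).det)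
      = fun σ => ∑ τ : Equiv.Perm (Fin n), ((Equiv.Perm.sign τ : ℤ) : ℂ) * ∏ i, M σ (τ i) i := by
    funext σ; rw [Matrix.det_apply']
  rw [hrw]
  apply DifferentiableOn.fun_sum
  intro τ _
  exact (differentiableOn_const _).mul (DifferentiableOn.fun_finset_prod (fun i _ => h (τ i) i))

lemma adj_diffOn {n : ℕ} {D : Set ℂ} {M : ℂ → Matrix (Fin n) (Fin n) ℂ}
    (h : ∀ i j, DifferentiableOn ℂ (fun σ => M σ i j) D) (i j : Fin n) :
    DifferentiableOn ℂ (fun σ => (M σ).adjugate i j) D := by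
  classical
  have hrw : (fun σ => (M σ).adjugate i j)
      = fun σ => ((M σ).updateRow j (Pi.single i 1)).det := by
    funext σ; rw [Matrix.adjugate_apply]
  rw [hrw]
  apply det_diffOn
  intro k l
  by_cases hk : k = j
  · subst hk
    simp only [Matrix.updateRow_apply, if_pos rfl]
    exact differentiableOn_const _
  · simp only [Matrix.updateRow_apply, if_neg hk]
    exact h k l

-- adjugate sum identities
lemma sum_row_adj {n : ℕ} (A : Matrix (Fin n) (Fin n) ℂ) (i0 j : Fin n) :
    ∑ l, A.adjugate i0 l * A l j = if i0 = j then A.det else 0 := by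
  have h := congrFun (congrFun (Matrix.adjugate_mul A) i0) j
  rw [Matrix.mul_apply] at h
  rw [h]
  simp [Matrix.smul_apply, Matrix.one_apply, mul_ite]

lemma sum_mul_adjcol {n : ℕ} (A : Matrix (Fin n) (Fin n) ℂ) (j i0 : Fin n) :
    ∑ l, A j l * A.adjugate l i0 = if j = i0 then A.det else 0 := by
  have h := congrFun (congrFun (Matrix.mul_adjugate A) j) i0
  rw [Matrix.mul_apply] at h
  rw [h]
  simp [Matrix.smul_apply, Matrix.one_apply, mul_ite]

lemma sum_mulVec_adjrow {n : ℕ} (A : Matrix (Fin n) (Fin n) ℂ) (x : Fin n → ℂ) (i0 : Fin n) :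
    ∑ i, (A.mulVec x) i * A.adjugate i0 i = A.det * x i0 := by
  simp only [Matrix.mulVec, dotProduct, Finset.sum_mul]
  rw [Finset.sum_comm]
  have : ∀ j, ∑ i, A i j * x j * A.adjugate i0 i = (∑ i, A.adjugate i0 i * A i j) * x j := by
    intro j; rw [Finset.sum_mul]; refine Finset.sum_congr rfl fun i _ => by ring
  rw [Finset.sum_congr rfl fun j _ => this j]
  have h2 : ∀ j, (∑ i, A.adjugate i0 i * A i j) = if i0 = j then A.det else 0 :=
    fun j => sum_row_adj A i0 j
  rw [Finset.sum_congr rfl fun j _ => by rw [h2 j]]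
  simp [ite_mul]

lemma sum_mulVec_swap {n : ℕ} (A : Matrix (Fin n) (Fin n) ℂ) (x y : Fin n → ℂ) :
    ∑ i, (A.mulVec x) i * y i = ∑ j, x j * ((A.transpose).mulVec y) j := by
  simp only [Matrix.mulVec, dotProduct, Finset.sum_mul, Finset.mul_sum,
    Matrix.transpose_apply]
  rw [Finset.sum_comm]
  refine Finset.sum_congr rfl fun j _ => Finset.sum_congr rfl fun i _ => by ring

-- the residue evaluation
lemma residue_eval {c : ℂ} {ε r : ℝ} (hr : 0 < r) (hrε : r < ε)
    {f : ℂ → ℂ} {S : Set ℂ} (hS : S.Countable)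
    {m : ℕ} {Co : ℕ → ℂ} {k0 : ℕ} (hk0 : k0 ∈ Finset.Icc 1 m)
    {B : ℂ → ℂ} (hB : DifferentiableOn ℂ B (ball c ε))
    (hfeq : ∀ z ∈ sphere c r \ S, f z =
      (∑ k ∈ Finset.Icc 1 m, Co k * (z - c) ^ ((k0 : ℤ) - 1 - (k : ℤ))) - B z) :
    (∮ z in C(c, r), f z) = 2 * Real.pi * I * Co k0 := by
  have hsub : sphere c r ⊆ ball c ε := fun z hz => by
    rw [mem_sphere] at hz; rw [mem_ball, hz]; exact hrε
  have hzero : ∀ z ∈ sphere c r, z - c ≠ 0 := by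
    intro z hz
    rw [mem_sphere] at hz
    intro h0
    rw [sub_eq_zero] at h0
    subst h0
    simp at hz
    exact hr.ne' hz.symm
  -- continuity of the singular sum on the sphere
  have hS1c : ContinuousOn (fun z => ∑ k ∈ Finset.Icc 1 m,
      Co k * (z - c) ^ ((k0 : ℤ) - 1 - (k : ℤ))) (sphere c r) := by
    refine continuousOn_finset_sum _ fun k _ => continuousOn_const.mul ?_
    exact (continuousOn_id.sub continuousOn_const).zpow₀ _ fun z hz => Or.inl (hzero z hz)
  have hBc : ContinuousOn B (sphere c r) := (hB.continuousOn).mono hsub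
  have hstep : (∮ z in C(c, r), f z) =
      (∮ z in C(c, r), ((∑ k ∈ Finset.Icc 1 m, Co k * (z - c) ^ ((k0 : ℤ) - 1 - (k : ℤ))) - B z)) :=
    circleIntegral_congr_off_countable hr hS hfeq
  rw [hstep, circleIntegral.integral_sub (hS1c.circleIntegrable hr.le)
    (hBc.circleIntegrable hr.le)]
  have hB0 : (∮ z in C(c, r), B z) = 0 := by
    apply circleIntegral_eq_zero_of_differentiable_on_off_countable hr.le countable_empty
    · exact hB.continuousOn.mono (closedBall_subset_ball hrε)
    · intro z hz
      exact hB.differentiableAt (isOpen_ball.mem_nhds (ball_subset_ball hrε.le hz.1))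
  have hsum : (∮ z in C(c, r), ∑ k ∈ Finset.Icc 1 m, Co k * (z - c) ^ ((k0 : ℤ) - 1 - (k : ℤ)))
      = ∑ k ∈ Finset.Icc 1 m, ∮ z in C(c, r), Co k * (z - c) ^ ((k0 : ℤ) - 1 - (k : ℤ)) := by
    apply circleIntegral_finset_sum
    intro k _
    refine ContinuousOn.circleIntegrable hr.le (continuousOn_const.mul ?_)
    exact (continuousOn_id.sub continuousOn_const).zpow₀ _ fun z hz => Or.inl (hzero z hz)
  rw [hsum, hB0, sub_zero]
  have hterm : ∀ k ∈ Finset.Icc 1 m,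
      (∮ z in C(c, r), Co k * (z - c) ^ ((k0 : ℤ) - 1 - (k : ℤ)))
      = if k = k0 then 2 * Real.pi * I * Co k0 else 0 := by
    intro k _
    rw [circleIntegral.integral_const_mul, zpow_circleIntegral hr]
    by_cases hkk : k = k0
    · subst hkk
      rw [if_pos (by ring), if_pos rfl]
      ring
    · rw [if_neg ?_, if_neg hkk, mul_zero]
      intro hcontra
      apply hkk
      have : (k : ℤ) = (k0 : ℤ) := by omega
      exact_mod_cast this
  rw [Finset.sum_congr rfl hterm, Finset.sum_ite_eq' (Finset.Icc 1 m) k0 (fun _ => 2 * Real.pi * I * Co k0)]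
  rw [if_pos hk0]

/-- the Green-type pairing between the local kernel spaces of `𝔓` and of its
adjoint family `𝔔(σ) = 𝔓(σ̄)ᴴ` is independent of the radius and nondegenerate. -/
theorem statement2 (n : ℕ) (hn : 1 ≤ n) (σ₀ : ℂ) (ε : ℝ) (hε : 0 < ε)
    (𝔓 : ℂ → Matrix (Fin n) (Fin n) ℂ)
    (hholo : ∀ i j, DifferentiableOn ℂ (fun σ => 𝔓 σ i j) (ball σ₀ ε))
    (hinv : ∀ σ : ℂ, 0 < dist σ σ₀ → dist σ σ₀ < ε → IsUnit (𝔓 σ)) :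
    (∀ i j, DifferentiableOn ℂ
        (fun σ => (𝔓 ((starRingEnd ℂ) σ)).conjTranspose i j)
        (ball ((starRingEnd ℂ) σ₀) ε)) ∧
    (∀ φ ∈ matKernelSpace (ball σ₀ ε) 𝔓 {σ₀},
      ∀ ψ ∈ matKernelSpace (ball ((starRingEnd ℂ) σ₀) ε)
          (fun σ => (𝔓 ((starRingEnd ℂ) σ)).conjTranspose) {(starRingEnd ℂ) σ₀},
        ∀ r₁ r₂ : ℝ, 0 < r₁ → r₁ < ε → 0 < r₂ → r₂ < ε →
          matPairing 𝔓 σ₀ r₁ φ ψ = matPairing 𝔓 σ₀ r₂ φ ψ) ∧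
    (∀ φ ∈ matKernelSpace (ball σ₀ ε) 𝔓 {σ₀},
      (∀ ψ ∈ matKernelSpace (ball ((starRingEnd ℂ) σ₀) ε)
          (fun σ => (𝔓 ((starRingEnd ℂ) σ)).conjTranspose) {(starRingEnd ℂ) σ₀},
        matPairing 𝔓 σ₀ (ε / 2) φ ψ = 0) → φ = 0) ∧
    (∀ ψ ∈ matKernelSpace (ball ((starRingEnd ℂ) σ₀) ε)
        (fun σ => (𝔓 ((starRingEnd ℂ) σ)).conjTranspose) {(starRingEnd ℂ) σ₀},
      (∀ φ ∈ matKernelSpace (ball σ₀ ε) 𝔓 {σ₀},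
        matPairing 𝔓 σ₀ (ε / 2) φ ψ = 0) → ψ = 0) := by
  classical
  have hQholo : ∀ i j, DifferentiableOn ℂ
      (fun σ => (𝔓 ((starRingEnd ℂ) σ)).conjTranspose i j)
      (ball ((starRingEnd ℂ) σ₀) ε) := by
    intro i j
    have h1 := conj_diffOn (hholo j i)
    have h2 : (fun w => (starRingEnd ℂ) ((fun σ => 𝔓 σ j i) ((starRingEnd ℂ) w)))
        = fun σ => (𝔓 ((starRingEnd ℂ) σ)).conjTranspose i j := by
      funext w
      simp [Matrix.conjTranspose_apply]
    rw [h2] at h1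
    exact h1
  refine ⟨hQholo, ?_, ?_, ?_⟩
  · -- radius independence
    rintro φ ⟨hφs, gφ, hgφ, Fφ, hFφ, hPφ⟩ ψ ⟨hψs, -⟩ r₁ r₂ hr₁ hr₁ε hr₂ hr₂ε
    obtain ⟨m, b, hb⟩ : IsPrincipalPart σ₀ (tconj ψ) := by
      have h0 := tconj_pp (pp_of_sing hψs)
      simpa using h0
    set J : ℂ → ℂ := fun z => ∑ i, gφ z i *
      (∑ k ∈ Finset.Icc 1 m, ((z - σ₀) ^ (-(k : ℤ))) * b k i) with hJ
    have hJd : ∀ z ∈ ball σ₀ ε \ {σ₀}, DifferentiableAt ℂ J z := by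
      rintro z ⟨hzb, hzc⟩
      rw [Set.mem_singleton_iff] at hzc
      apply DifferentiableAt.fun_sum
      intro i _
      apply DifferentiableAt.mul
      · exact (hgφ i).differentiableAt (isOpen_ball.mem_nhds hzb)
      · apply DifferentiableAt.fun_sum
        intro k _
        apply DifferentiableAt.mul_const
        exact (differentiableAt_zpow.mpr (Or.inl (sub_ne_zero.2 hzc))).comp z
          (differentiableAt_id.sub_const σ₀)
    have key : ∀ r : ℝ, 0 < r → r < ε →
        matPairing 𝔓 σ₀ r φ ψ = (2 * (Real.pi : ℂ))⁻¹ * ∮ z in C(σ₀, r), J z := by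
      intro r hr hrε
      unfold matPairing
      congr 1
      apply circleIntegral_congr_off_countable hr (hFφ.countable.union (countable_singleton σ₀))
      rintro z ⟨hzs, hzS⟩
      have hzb : z ∈ ball σ₀ ε := by
        rw [mem_sphere] at hzs; rw [mem_ball, hzs]; exact hrε
      have hzF : z ∉ Fφ := fun h => hzS (Or.inl h)
      have hgz := hPφ z ⟨hzb, hzF⟩
      have h1 : ∀ i, (starRingEnd ℂ) (ψ ((starRingEnd ℂ) z) i)
          = ∑ k ∈ Finset.Icc 1 m, ((z - σ₀) ^ (-(k : ℤ))) * b k i := by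
        intro i
        have := congrFun (hb z) i
        simpa [Finset.sum_apply, Pi.smul_apply, smul_eq_mul, tconj] using this
      rw [hgz]
      simp only [h1, hJ]
    have ann : ∀ {r R : ℝ}, 0 < r → r ≤ R → R < ε →
        (∮ z in C(σ₀, R), J z) = ∮ z in C(σ₀, r), J z := by
      intro r R h0 hle hRε
      apply circleIntegral_eq_of_differentiable_on_annulus_off_countable h0 hle countable_empty
      · intro z hz
        have hz1 : z ∈ ball σ₀ ε \ {σ₀} := by
          constructor
          · exact lt_of_le_of_lt (mem_closedBall.mp hz.1) hRε
          · intro hc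
            rw [Set.mem_singleton_iff] at hc
            subst hc
            exact hz.2 (mem_ball_self h0)
        exact (hJd z hz1).continuousAt.continuousWithinAt
      · intro z hz
        refine hJd z ⟨ball_subset_ball hRε.le hz.1.1, ?_⟩
        intro hc
        rw [Set.mem_singleton_iff] at hc
        subst hc
        exact hz.1.2 (mem_closedBall_self h0.le)
    rw [key r₁ hr₁ hr₁ε, key r₂ hr₂ hr₂ε]
    rcases le_total r₁ r₂ with h | h
    · rw [ann hr₁ h hr₂ε]
    · rw [ann hr₂ h hr₁ε]
  · -- nondegeneracy in φ
    rintro φ ⟨hφs, gφ, hgφ, Fφ, hFφ, hPφ⟩ hzero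
    obtain ⟨m, a, ha⟩ := pp_of_sing hφs
    have hNd : DifferentiableOn ℂ (fun σ => (𝔓 σ).det) (ball σ₀ ε) := det_diffOn hholo
    have hNne : ∀ σ ∈ ball σ₀ ε, σ ≠ σ₀ → (𝔓 σ).det ≠ 0 := by
      intro σ hσ hσc
      have hu := hinv σ (dist_pos.2 hσc) (mem_ball.mp hσ)
      exact isUnit_iff_ne_zero.mp ((Matrix.isUnit_iff_isUnit_det _).mp hu)
    have hco : ∀ k0 ∈ Finset.Icc 1 m, ∀ i0 : Fin n, a k0 i0 = 0 := by
      intro k0 hk0 i0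
      have hvd : ∀ i, DifferentiableOn ℂ
          (fun σ => (σ - σ₀) ^ (k0 - 1) * (𝔓 σ).adjugate i0 i) (ball σ₀ ε) := fun i =>
        (((differentiableOn_id.sub (differentiableOn_const _)).pow _).mul (adj_diffOn hholo i0 i))
      obtain ⟨m', A, e, hed, hsplit⟩ := merom_split hε hNd hNne hvd
      set pp : ℂ → Fin n → ℂ :=
        fun σ => ∑ k ∈ Finset.Icc 1 m', ((σ - σ₀) ^ (-(k : ℤ))) • A k with hpp
      have hppval : ∀ σ ∈ ball σ₀ ε, σ ≠ σ₀ → ∀ i,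
          pp σ i = ((𝔓 σ).det)⁻¹ * ((σ - σ₀) ^ (k0 - 1) * (𝔓 σ).adjugate i0 i) - e σ i := by
        intro σ hσ hσc i
        have := hsplit σ hσ hσc i
        rw [hpp]
        linear_combination -this
      -- the holomorphic correction
      set g : ℂ → Fin n → ℂ := fun σ j => (σ - σ₀) ^ (k0 - 1) * (if i0 = j then 1 else 0)
        - (((𝔓 σ).transpose).mulVec (e σ)) j with hg
      have hkerP : ∀ σ ∈ ball σ₀ ε \ {σ₀}, ((𝔓 σ).transpose).mulVec (pp σ) = g σ := by
        rintro σ ⟨hσb, hσc⟩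
        rw [Set.mem_singleton_iff] at hσc
        funext j
        have hNz : (𝔓 σ).det ≠ 0 := hNne σ hσb hσc
        simp only [Matrix.mulVec, dotProduct, Matrix.transpose_apply, hg]
        rw [Finset.sum_congr rfl (fun l _ => by rw [hppval σ hσb hσc l])]
        have hs0 : ∀ l : Fin n, 𝔓 σ l j *
            (((𝔓 σ).det)⁻¹ * ((σ - σ₀) ^ (k0 - 1) * (𝔓 σ).adjugate i0 l) - e σ l)
            = ((𝔓 σ).det)⁻¹ * (σ - σ₀) ^ (k0 - 1) * ((𝔓 σ).adjugate i0 l * 𝔓 σ l j)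
              - 𝔓 σ l j * e σ l := by intro l; ring
        rw [Finset.sum_congr rfl (fun l _ => hs0 l), Finset.sum_sub_distrib, ← Finset.mul_sum,
          sum_row_adj]
        by_cases hij : i0 = j
        · rw [if_pos hij, if_pos hij, mul_one]
          field_simp
        · rw [if_neg hij, if_neg hij, mul_zero, mul_zero]
      set ψt : ℂ → Fin n → ℂ := tconj pp with hψt
      have hψmem : ψt ∈ matKernelSpace (ball ((starRingEnd ℂ) σ₀) ε)
          (fun σ => (𝔓 ((starRingEnd ℂ) σ)).conjTranspose) {(starRingEnd ℂ) σ₀} := by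
        refine ⟨sing_of_pp (tconj_pp ⟨m', A, fun σ => rfl⟩), tconj g, ?_,
          (starRingEnd ℂ) '' {σ₀}, (Set.finite_singleton σ₀).image _, ?_⟩
        · intro i
          apply tconj_diffOn
          intro j
          apply DifferentiableOn.sub
          · exact ((differentiableOn_id.sub (differentiableOn_const _)).pow _).mul
              (differentiableOn_const _)
          · have hmv : (fun σ => (((𝔓 σ).transpose).mulVec (e σ)) j)
                = fun σ => ∑ l, 𝔓 σ l j * e σ l := by
              funext σ
              simp [Matrix.mulVec, dotProduct, Matrix.transpose_apply]
            rw [hmv]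
            exact DifferentiableOn.fun_sum fun l _ => (hholo l j).mul (hed l)
        · exact tconj_kernel
            (fun σ i j => by simp [Matrix.conjTranspose_apply, Matrix.transpose_apply]) hkerP
      have hz := hzero ψt hψmem
      have hπ : (Real.pi : ℂ) ≠ 0 := by exact_mod_cast Real.pi_ne_zero
      have heval : matPairing 𝔓 σ₀ (ε / 2) φ ψt
          = (2 * (Real.pi : ℂ))⁻¹ * (2 * Real.pi * I * a k0 i0) := by
        unfold matPairing
        congr 1
        apply residue_eval (half_pos hε) (half_lt_self hε)
          (hFφ.countable.union (countable_singleton σ₀)) hk0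
          (B := fun z => ∑ i, gφ z i * e z i)
          (DifferentiableOn.fun_sum fun i _ => (hgφ i).mul (hed i))
        rintro z ⟨hzs, hzS⟩
        have hzb : z ∈ ball σ₀ ε := by
          rw [mem_sphere] at hzs; rw [mem_ball, hzs]; exact half_lt_self hε
        have hzc : z ≠ σ₀ := by
          intro hcon; subst hcon
          rw [mem_sphere] at hzs; simp at hzs
          exact (half_pos hε).ne' hzs.symm
        have hzF : z ∉ Fφ := fun h => hzS (Or.inl h)
        have hzne : z - σ₀ ≠ 0 := sub_ne_zero.2 hzc
        have hNz : (𝔓 z).det ≠ 0 := hNne z hzb hzc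
        have hgz := hPφ z ⟨hzb, hzF⟩
        have hconj : ∀ i, (starRingEnd ℂ) (ψt ((starRingEnd ℂ) z) i) = pp z i := by
          intro i; simp [hψt, tconj]
        calc ∑ i, (𝔓 z).mulVec (φ z) i * (starRingEnd ℂ) (ψt ((starRingEnd ℂ) z) i)
            = ∑ i, (𝔓 z).mulVec (φ z) i * pp z i := by
              refine Finset.sum_congr rfl fun i _ => by rw [hconj]
          _ = ∑ i, ((𝔓 z).mulVec (φ z) i *
                (((𝔓 z).det)⁻¹ * ((z - σ₀) ^ (k0 - 1) * (𝔓 z).adjugate i0 i))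
                - (𝔓 z).mulVec (φ z) i * e z i) := by
              refine Finset.sum_congr rfl fun i _ => by rw [hppval z hzb hzc i]; ring
          _ = ((𝔓 z).det)⁻¹ * (z - σ₀) ^ (k0 - 1) *
                (∑ i, (𝔓 z).mulVec (φ z) i * (𝔓 z).adjugate i0 i)
                - ∑ i, gφ z i * e z i := by
              rw [Finset.sum_sub_distrib]
              congr 1
              · rw [Finset.mul_sum]
                refine Finset.sum_congr rfl fun i _ => by ring
              · refine Finset.sum_congr rfl fun i _ => by rw [hgz]
          _ = (z - σ₀) ^ (k0 - 1) * φ z i0 - ∑ i, gφ z i * e z i := by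
              rw [sum_mulVec_adjrow]
              field_simp
          _ = (∑ k ∈ Finset.Icc 1 m, a k i0 * (z - σ₀) ^ ((k0 : ℤ) - 1 - (k : ℤ)))
                - ∑ i, gφ z i * e z i := by
              congr 1
              have hφz := congrFun (ha z) i0
              simp only [Finset.sum_apply, Pi.smul_apply, smul_eq_mul] at hφz
              rw [hφz, Finset.mul_sum]
              refine Finset.sum_congr rfl fun k _ => ?_
              have hk0ge : 1 ≤ k0 := (Finset.mem_Icc.mp hk0).1
              rw [← zpow_natCast (z - σ₀) (k0 - 1), ← mul_assoc, ← zpow_add₀ hzne]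
              have : ((k0 - 1 : ℕ) : ℤ) + (-(k : ℤ)) = (k0 : ℤ) - 1 - (k : ℤ) := by
                rw [Nat.cast_sub hk0ge]; push_cast; ring
              rw [this]
              ring
      rw [heval] at hz
      have hne : (2 * (Real.pi : ℂ))⁻¹ ≠ 0 := inv_ne_zero (by simp [hπ])
      have h3 := (mul_eq_zero.mp hz).resolve_left hne
      have hne2 : 2 * (Real.pi : ℂ) * I ≠ 0 := mul_ne_zero (by simp [hπ]) I_ne_zero
      exact (mul_eq_zero.mp h3).resolve_left hne2
    funext σ
    rw [ha σ]
    refine Finset.sum_eq_zero fun k hk => ?_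
    have : a k = 0 := funext fun i => hco k hk i
    rw [this, smul_zero]
  · -- nondegeneracy in ψ
    rintro ψ ⟨hψs, gψ, hgψ, Fψ, hFψ, hPψ⟩ hzero
    set ψt : ℂ → Fin n → ℂ := tconj ψ with hψt
    obtain ⟨mb, b, hb⟩ : IsPrincipalPart σ₀ ψt := by
      have h0 := tconj_pp (pp_of_sing hψs)
      simpa using h0
    have hNd : DifferentiableOn ℂ (fun σ => (𝔓 σ).det) (ball σ₀ ε) := det_diffOn hholo
    have hNne : ∀ σ ∈ ball σ₀ ε, σ ≠ σ₀ → (𝔓 σ).det ≠ 0 := by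
      intro σ hσ hσc
      have hu := hinv σ (dist_pos.2 hσc) (mem_ball.mp hσ)
      exact isUnit_iff_ne_zero.mp ((Matrix.isUnit_iff_isUnit_det _).mp hu)
    -- kernel data for 𝔓ᵀ at σ₀
    have hgψt : ∀ j, DifferentiableOn ℂ (fun σ => tconj gψ σ j) (ball σ₀ ε) := by
      intro j
      have := tconj_diffOn (c := (starRingEnd ℂ) σ₀) hgψ j
      simpa using this
    have hker : ∀ σ ∈ ball σ₀ ε \ ((starRingEnd ℂ) '' Fψ),
        ((𝔓 σ).transpose).mulVec (ψt σ) = tconj gψ σ := by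
      have h1 := tconj_kernel (c := (starRingEnd ℂ) σ₀)
        (R := fun σ => (𝔓 ((starRingEnd ℂ) σ)).conjTranspose)
        (M := fun σ => (𝔓 σ).transpose)
        (fun σ i j => by simp [Matrix.conjTranspose_apply, Matrix.transpose_apply]) hPψ
      simpa using h1
    have hπ : (Real.pi : ℂ) ≠ 0 := by exact_mod_cast Real.pi_ne_zero
    have hco : ∀ k0 ∈ Finset.Icc 1 mb, ∀ i0 : Fin n, b k0 i0 = 0 := by
      intro k0 hk0 i0
      have hvd : ∀ i, DifferentiableOn ℂ
          (fun σ => (σ - σ₀) ^ (k0 - 1) * (𝔓 σ).adjugate i i0) (ball σ₀ ε) := fun i =>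
        (((differentiableOn_id.sub (differentiableOn_const _)).pow _).mul (adj_diffOn hholo i i0))
      obtain ⟨m', A, e, hed, hsplit⟩ := merom_split hε hNd hNne hvd
      set φc : ℂ → Fin n → ℂ :=
        fun σ => ∑ k ∈ Finset.Icc 1 m', ((σ - σ₀) ^ (-(k : ℤ))) • A k with hφc
      have hφval : ∀ σ ∈ ball σ₀ ε, σ ≠ σ₀ → ∀ i,
          φc σ i = ((𝔓 σ).det)⁻¹ * ((σ - σ₀) ^ (k0 - 1) * (𝔓 σ).adjugate i i0) - e σ i := by
        intro σ hσ hσc i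
        have := hsplit σ hσ hσc i
        rw [hφc]
        linear_combination -this
      set g : ℂ → Fin n → ℂ := fun σ j => (σ - σ₀) ^ (k0 - 1) * (if j = i0 then 1 else 0)
        - ((𝔓 σ).mulVec (e σ)) j with hg
      have hkerφ : ∀ σ ∈ ball σ₀ ε \ {σ₀}, (𝔓 σ).mulVec (φc σ) = g σ := by
        rintro σ ⟨hσb, hσc⟩
        rw [Set.mem_singleton_iff] at hσc
        funext j
        have hNz : (𝔓 σ).det ≠ 0 := hNne σ hσb hσc
        simp only [Matrix.mulVec, dotProduct, hg]
        rw [Finset.sum_congr rfl (fun l _ => by rw [hφval σ hσb hσc l])]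
        have hs0 : ∀ l : Fin n, 𝔓 σ j l *
            (((𝔓 σ).det)⁻¹ * ((σ - σ₀) ^ (k0 - 1) * (𝔓 σ).adjugate l i0) - e σ l)
            = ((𝔓 σ).det)⁻¹ * (σ - σ₀) ^ (k0 - 1) * (𝔓 σ j l * (𝔓 σ).adjugate l i0)
              - 𝔓 σ j l * e σ l := by intro l; ring
        rw [Finset.sum_congr rfl (fun l _ => hs0 l), Finset.sum_sub_distrib, ← Finset.mul_sum,
          sum_mul_adjcol]
        by_cases hij : j = i0
        · rw [if_pos hij, if_pos hij, mul_one]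
          field_simp
        · rw [if_neg hij, if_neg hij, mul_zero, mul_zero]
      have hφmem : φc ∈ matKernelSpace (ball σ₀ ε) 𝔓 {σ₀} := by
        refine ⟨sing_of_pp ⟨m', A, fun σ => rfl⟩, g, ?_, {σ₀}, Set.finite_singleton σ₀, hkerφ⟩
        intro j
        apply DifferentiableOn.sub
        · exact ((differentiableOn_id.sub (differentiableOn_const _)).pow _).mul
            (differentiableOn_const _)
        · have hmv : (fun σ => ((𝔓 σ).mulVec (e σ)) j)
              = fun σ => ∑ l, 𝔓 σ j l * e σ l := by
            funext σ
            simp [Matrix.mulVec, dotProduct]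
          rw [hmv]
          exact DifferentiableOn.fun_sum fun l _ => (hholo j l).mul (hed l)
      have hz := hzero φc hφmem
      have heval : matPairing 𝔓 σ₀ (ε / 2) φc ψ
          = (2 * (Real.pi : ℂ))⁻¹ * (2 * Real.pi * I * b k0 i0) := by
        unfold matPairing
        congr 1
        apply residue_eval (half_pos hε) (half_lt_self hε)
          ((hFψ.image _).countable.union (countable_singleton σ₀)) hk0
          (B := fun z => ∑ j, e z j * tconj gψ z j)
          (DifferentiableOn.fun_sum fun j _ => (hed j).mul (hgψt j))
        rintro z ⟨hzs, hzS⟩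
        have hzb : z ∈ ball σ₀ ε := by
          rw [mem_sphere] at hzs; rw [mem_ball, hzs]; exact half_lt_self hε
        have hzc : z ≠ σ₀ := by
          intro hcon; subst hcon
          rw [mem_sphere] at hzs; simp at hzs
          exact (half_pos hε).ne' hzs.symm
        have hzF : z ∉ (starRingEnd ℂ) '' Fψ := fun h => hzS (Or.inl h)
        have hzne : z - σ₀ ≠ 0 := sub_ne_zero.2 hzc
        have hgz := hkerφ z ⟨hzb, Set.mem_singleton_iff.not.mpr hzc⟩
        have hkz := hker z ⟨hzb, hzF⟩
        have hconj : ∀ i, (starRingEnd ℂ) (ψ ((starRingEnd ℂ) z) i) = ψt z i := by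
          intro i; simp [hψt, tconj]
        calc ∑ i, (𝔓 z).mulVec (φc z) i * (starRingEnd ℂ) (ψ ((starRingEnd ℂ) z) i)
            = ∑ i, g z i * ψt z i := by
              refine Finset.sum_congr rfl fun i _ => ?_
              rw [hconj, hgz]
          _ = ∑ i, ((z - σ₀) ^ (k0 - 1) * (if i = i0 then 1 else 0) * ψt z i
                - ((𝔓 z).mulVec (e z)) i * ψt z i) := by
              refine Finset.sum_congr rfl fun i _ => ?_
              rw [hg]
              ring
          _ = (z - σ₀) ^ (k0 - 1) * ψt z i0 - ∑ j, e z j * tconj gψ z j := by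
              rw [Finset.sum_sub_distrib]
              congr 1
              · have hrw : ∀ i, (z - σ₀) ^ (k0 - 1) * (if i = i0 then 1 else 0) * ψt z i
                    = if i = i0 then (z - σ₀) ^ (k0 - 1) * ψt z i else 0 := by
                  intro i; by_cases h : i = i0 <;> simp [h]
                rw [Finset.sum_congr rfl fun i _ => hrw i, Finset.sum_ite_eq' Finset.univ i0
                  (fun i => (z - σ₀) ^ (k0 - 1) * ψt z i), if_pos (Finset.mem_univ i0)]
              · rw [sum_mulVec_swap]
                refine Finset.sum_congr rfl fun j _ => by rw [congrFun hkz j]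
          _ = (∑ k ∈ Finset.Icc 1 mb, b k i0 * (z - σ₀) ^ ((k0 : ℤ) - 1 - (k : ℤ)))
                - ∑ j, e z j * tconj gψ z j := by
              congr 1
              have hψz := congrFun (hb z) i0
              simp only [Finset.sum_apply, Pi.smul_apply, smul_eq_mul] at hψz
              rw [hψz, Finset.mul_sum]
              refine Finset.sum_congr rfl fun k _ => ?_
              have hk0ge : 1 ≤ k0 := (Finset.mem_Icc.mp hk0).1
              rw [← zpow_natCast (z - σ₀) (k0 - 1), ← mul_assoc, ← zpow_add₀ hzne]
              have : ((k0 - 1 : ℕ) : ℤ) + (-(k : ℤ)) = (k0 : ℤ) - 1 - (k : ℤ) := by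
                rw [Nat.cast_sub hk0ge]; push_cast; ring
              rw [this]
              ring
      rw [heval] at hz
      have hne : (2 * (Real.pi : ℂ))⁻¹ ≠ 0 := inv_ne_zero (by simp [hπ])
      have h3 := (mul_eq_zero.mp hz).resolve_left hne
      have hne2 : 2 * (Real.pi : ℂ) * I ≠ 0 := mul_ne_zero (by simp [hπ]) I_ne_zero
      exact (mul_eq_zero.mp h3).resolve_left hne2
    -- conclude ψ = 0
    have hψt0 : ∀ σ, ψt σ = 0 := by
      intro σ
      rw [hb σ]
      refine Finset.sum_eq_zero fun k hk => ?_
      have : b k = 0 := funext fun i => hco k hk i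
      rw [this, smul_zero]
    funext τ
    funext i
    have h1 := congrFun (hψt0 ((starRingEnd ℂ) τ)) i
    simp only [hψt, tconj, Complex.conj_conj, Pi.zero_apply] at h1
    have h2 : ψ τ i = 0 := by
      have := congrArg (starRingEnd ℂ) h1
      simpa using this
    exact h2
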